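/- With Q₁ := τ⁻¹I − δA*A positive semidefinite (τδ ≤ 1/‖A‖²), the minimizer of u ↦ (δ/2)‖Au − c₁‖² + ⟨μ, Au⟩ + H(u) + (1/2)‖u − u⁰‖²_{Q₁} equals the proximal point (I + τ∂H)⁻¹(u⁰ − τA*(μ + δ(Au⁰ − c₁))). In particular, when c₁ = Au⁰ − r for residual r, the update reduces to (I + τ∂H)⁻¹(u⁰ − τA*(μ + δr)). -/

import Mathlib

open scoped RealInnerProductSpace

/-- A function to `EReal` is proper if it never takes the value `⊥` and is somewhere
finite. -/
def EProper {H : Type*} (f : H → EReal) : Prop :=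
  (∀ x, f x ≠ ⊥) ∧ ∃ x, f x ≠ ⊤

/-- Convexity for extended-real-valued functions. -/
def EConvexOn {H : Type*} [AddCommGroup H] [Module ℝ H] (f : H → EReal) : Prop :=
  ∀ x y : H, ∀ a b : ℝ, 0 ≤ a → 0 ≤ b → a + b = 1 →
    f (a • x + b • y) ≤ (a : EReal) * f x + (b : EReal) * f y

/-- The convex subdifferential of `f : H → EReal` at `x`. -/
def ESubdiff {H : Type*} [NormedAddCommGroup H] [InnerProductSpace ℝ H]
    (f : H → EReal) (x : H) : Set H :=
  {g | ∀ y, f x + ((⟪g, y - x⟫ : ℝ) : EReal) ≤ f y}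

/-- `u` is a proximal point of `f` with parameter `α` at `w`, i.e. a minimiser of
`v ↦ (1/2)‖v − w‖² + α f(v)`; single-valuedness makes this the resolvent
`(I + α ∂f)⁻¹(w)`. -/
def IsProxPt {H : Type*} [NormedAddCommGroup H] [InnerProductSpace ℝ H]
    (f : H → EReal) (α : ℝ) (w u : H) : Prop :=
  ∀ v : H, ((1 / 2 * ‖u - w‖ ^ 2 : ℝ) : EReal) + (α : EReal) * f u ≤
    ((1 / 2 * ‖v - w‖ ^ 2 : ℝ) : EReal) + (α : EReal) * f v

/-- The convex (Fenchel) conjugate of `f : H → EReal`. -/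
noncomputable def EConj {H : Type*} [NormedAddCommGroup H] [InnerProductSpace ℝ H]
    (f : H → EReal) (μ : H) : EReal :=
  ⨆ v : H, ((⟪μ, v⟫ : ℝ) : EReal) - f v

/- Auxiliary lemmas -/

lemma ereal_add_real_le_iff (c : ℝ) {x y : EReal} :
    (c : EReal) + x ≤ (c : EReal) + y ↔ x ≤ y := by
  constructor
  · intro h
    have h2 := add_le_add_right h ((-c : ℝ) : EReal)
    rwa [← add_assoc, ← add_assoc, ← EReal.coe_add, neg_add_cancel, EReal.coe_zero,
      zero_add, zero_add] at h2
  · intro h; exact add_le_add_right h _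

lemma ereal_mul_le_mul_iff {τ : ℝ} (hτ : 0 < τ) {x y : EReal} :
    (τ : EReal) * x ≤ (τ : EReal) * y ↔ x ≤ y := by
  constructor
  · intro h
    have h2 := mul_le_mul_of_nonneg_left h
      (show (0 : EReal) ≤ ((τ⁻¹ : ℝ) : EReal) by
        exact_mod_cast inv_nonneg.2 hτ.le)
    rwa [← mul_assoc, ← mul_assoc, ← EReal.coe_mul, inv_mul_cancel₀ hτ.ne',
      EReal.coe_one, one_mul, one_mul] at h2
  · intro h
    exact mul_le_mul_of_nonneg_left h (by exact_mod_cast hτ.le)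

lemma ereal_mul_add_real (τ a : ℝ) (hτ : 0 < τ) {b : EReal} (hb : b ≠ ⊥) :
    (τ : EReal) * ((a : EReal) + b) = ((τ * a : ℝ) : EReal) + (τ : EReal) * b := by
  induction b with
  | bot => exact (hb rfl).elim
  | coe b =>
    rw [← EReal.coe_add, ← EReal.coe_mul, ← EReal.coe_mul, ← EReal.coe_add, mul_add]
  | top =>
    rw [EReal.coe_add_top, EReal.coe_mul_top_of_pos hτ, EReal.coe_add_top]

lemma quad_key {U V : Type*} [NormedAddCommGroup U] [InnerProductSpace ℝ U]
    [CompleteSpace U] [NormedAddCommGroup V] [InnerProductSpace ℝ V] [CompleteSpace V]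
    (A : U →L[ℝ] V) (δ τ : ℝ) (hτ : τ ≠ 0) (c₁ μ : V) (u0 u : U) :
    (δ / 2 * ‖A u - c₁‖ ^ 2 + ⟪μ, A u⟫
        + 1 / 2 * (τ⁻¹ * ‖u - u0‖ ^ 2 - δ * ‖A (u - u0)‖ ^ 2))
    = (δ / 2 * ‖A (u0 - τ • A.adjoint (μ + δ • (A u0 - c₁))) - c₁‖ ^ 2
        + ⟪μ, A (u0 - τ • A.adjoint (μ + δ • (A u0 - c₁)))⟫
        + 1 / 2 * (τ⁻¹ * ‖(u0 - τ • A.adjoint (μ + δ • (A u0 - c₁))) - u0‖ ^ 2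
          - δ * ‖A ((u0 - τ • A.adjoint (μ + δ • (A u0 - c₁))) - u0)‖ ^ 2))
      + 1 / (2 * τ) * ‖u - (u0 - τ • A.adjoint (μ + δ • (A u0 - c₁)))‖ ^ 2 := by
  rw [← sub_eq_iff_eq_add', eq_comm]
  simp only [← real_inner_self_eq_norm_sq, map_sub, map_smul]
  simp only [inner_sub_left, inner_sub_right, inner_add_left, inner_add_right,
    real_inner_smul_left, real_inner_smul_right,
    ContinuousLinearMap.adjoint_inner_left, ContinuousLinearMap.adjoint_inner_right]
  simp only [inner_sub_left, inner_sub_right, inner_add_left, inner_add_right,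
    real_inner_smul_left, real_inner_smul_right, map_sub, map_smul]
  simp only [real_inner_comm c₁ (A u), real_inner_comm c₁ (A u0),
    real_inner_comm c₁ (A (A.adjoint (μ + δ • (A u0 - c₁)))),
    real_inner_comm μ (A u), real_inner_comm μ (A u0),
    real_inner_comm μ (A (A.adjoint (μ + δ • (A u0 - c₁)))),
    real_inner_comm (A u0) (A (A.adjoint (μ + δ • (A u0 - c₁))))]
  field_simp
  ring

/-- With `Q₁ = τ⁻¹I − δA*A` positive semidefinite (`τδ‖A‖² ≤ 1`), `u`
minimises `(δ/2)‖Au − c₁‖² + ⟪μ, Au⟫ + H(u) + (1/2)‖u − u⁰‖²_{Q₁}` iff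
`u = (I + τ∂H)⁻¹(u⁰ − τA*(μ + δ(Au⁰ − c₁)))`; in particular for `c₁ = Au⁰ − r` the
update is `(I + τ∂H)⁻¹(u⁰ − τA*(μ + δr))`. -/
theorem preconditioned_update_is_prox
    {U V : Type*} [NormedAddCommGroup U] [InnerProductSpace ℝ U] [CompleteSpace U]
    [NormedAddCommGroup V] [InnerProductSpace ℝ V] [CompleteSpace V]
    (Hf : U → EReal) (hprop : EProper Hf) (hconv : EConvexOn Hf)
    (hlsc : LowerSemicontinuous Hf)
    (A : U →L[ℝ] V) (δ τ : ℝ) (hδ : 0 < δ) (hτ : 0 < τ)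
    (hpsd : τ * δ * ‖A‖ ^ 2 ≤ 1) (c₁ μ : V) (u0 : U)
    (Φ : U → EReal)
    (hΦ : ∀ u : U, Φ u =
      ((δ / 2 * ‖A u - c₁‖ ^ 2 + ⟪μ, A u⟫
        + 1 / 2 * (τ⁻¹ * ‖u - u0‖ ^ 2 - δ * ‖A (u - u0)‖ ^ 2) : ℝ) : EReal) + Hf u) :
    (∀ u : U, (∀ v : U, Φ u ≤ Φ v) ↔
      IsProxPt Hf τ (u0 - τ • A.adjoint (μ + δ • (A u0 - c₁))) u) ∧
    (∀ r : V, c₁ = A u0 - r →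
      ∀ u : U, (∀ v : U, Φ u ≤ Φ v) ↔
        IsProxPt Hf τ (u0 - τ • A.adjoint (μ + δ • r)) u) := by
  set w : U := u0 - τ • A.adjoint (μ + δ • (A u0 - c₁)) with hw
  set C : ℝ := δ / 2 * ‖A w - c₁‖ ^ 2 + ⟪μ, A w⟫
      + 1 / 2 * (τ⁻¹ * ‖w - u0‖ ^ 2 - δ * ‖A (w - u0)‖ ^ 2) with hC
  have hΦ' : ∀ u : U, Φ u = ((C : ℝ) : EReal)
      + ((((1 / (2 * τ) * ‖u - w‖ ^ 2 : ℝ)) : EReal) + Hf u) := by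
    intro u
    rw [hΦ u, quad_key A δ τ hτ.ne' c₁ μ u0 u, ← hw, ← hC, EReal.coe_add, add_assoc]
  have hmul : ∀ t : U, (τ : EReal) * (((1 / (2 * τ) * ‖t - w‖ ^ 2 : ℝ) : EReal) + Hf t)
      = ((1 / 2 * ‖t - w‖ ^ 2 : ℝ) : EReal) + (τ : EReal) * Hf t := by
    intro t
    rw [ereal_mul_add_real τ _ hτ (hprop.1 t)]
    have h2 : (τ * (1 / (2 * τ) * ‖t - w‖ ^ 2) : ℝ) = 1 / 2 * ‖t - w‖ ^ 2 := by
      field_simp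
    rw [h2]
  have main : ∀ u : U, (∀ v : U, Φ u ≤ Φ v) ↔ IsProxPt Hf τ w u := by
    intro u
    constructor
    · intro h v
      have h1 := h v
      rw [hΦ' u, hΦ' v] at h1
      have h2 := (ereal_add_real_le_iff C).1 h1
      have h3 := (ereal_mul_le_mul_iff hτ).2 h2
      rwa [hmul u, hmul v] at h3
    · intro h v
      rw [hΦ' u, hΦ' v]
      apply (ereal_add_real_le_iff C).2
      apply (ereal_mul_le_mul_iff hτ).1
      rw [hmul u, hmul v]
      exact h v
  refine ⟨main, ?_⟩
  intro r hr u
  have hrr : A u0 - c₁ = r := by rw [hr]; exact sub_sub_cancel _ _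
  rw [← hrr, ← hw]
  exact main u
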